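/- Let n ≥ 2 be an integer and define F₂ : (−∞, −1/(n−1)) → ℝ by F₂(t) = (1/(1+(n−1)²))·[(n−1)·ln(|1+(n−1)t|/√(1+t²)) + arctan t]. Then F₂ is strictly decreasing and is a bijection from (−∞, −1/(n−1)) onto (−∞, K₁), where K₁ = (1/(1+(n−1)²))·((n−1)·ln(n−1) − π/2); in particular lim_{t → −∞} F₂(t) = K₁ and lim_{t → (−1/(n−1))⁻} F₂(t) = −∞. Consequently the inverse w = F₂⁻¹ : (−∞, K₁) → (−∞, −1/(n−1)) is differentiable, satisfies w'(s) = (1 + w(s)²)·(1 + (n−1)·w(s)) for every s ∈ (−∞, K₁), and has lim_{s → −∞} w(s) = −1/(n−1) and lim_{s → K₁⁻} w(s) = −∞. -/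

import Mathlib

open Set Filter Real

/-- The first integral `F₂` of `w' = (1+w²)(1+(n−1)w)` on
`(−∞, −1/(n−1))` is a strictly decreasing bijection onto `(−∞, K₁)` with the stated
limits, and its inverse `w = F₂⁻¹` solves the ODE with `w → −1/(n−1)` at `−∞` and
`w → −∞` at `K₁⁻`. -/
theorem first_integral_F2_properties_and_inverse
    (n : ℕ) (hn : 2 ≤ n) (F₂ : ℝ → ℝ) (K₁ : ℝ)
    (hF : ∀ t : ℝ, F₂ t = (1 / (1 + ((n : ℝ) - 1) ^ 2)) *
      (((n : ℝ) - 1) * Real.log (|1 + ((n : ℝ) - 1) * t| / Real.sqrt (1 + t ^ 2))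
        + Real.arctan t))
    (hK : K₁ = (1 / (1 + ((n : ℝ) - 1) ^ 2)) *
      (((n : ℝ) - 1) * Real.log ((n : ℝ) - 1) - Real.pi / 2)) :
    StrictAntiOn F₂ (Set.Iio (-1 / ((n : ℝ) - 1))) ∧
    Set.BijOn F₂ (Set.Iio (-1 / ((n : ℝ) - 1))) (Set.Iio K₁) ∧
    Filter.Tendsto F₂ Filter.atBot (nhds K₁) ∧
    Filter.Tendsto F₂ (nhdsWithin (-1 / ((n : ℝ) - 1)) (Set.Iio (-1 / ((n : ℝ) - 1))))
      Filter.atBot ∧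
    ∀ w : ℝ → ℝ,
      Set.MapsTo w (Set.Iio K₁) (Set.Iio (-1 / ((n : ℝ) - 1))) →
      Set.InvOn w F₂ (Set.Iio (-1 / ((n : ℝ) - 1))) (Set.Iio K₁) →
      (∀ s ∈ Set.Iio K₁,
        HasDerivAt w ((1 + w s ^ 2) * (1 + ((n : ℝ) - 1) * w s)) s) ∧
      Filter.Tendsto w Filter.atBot (nhds (-1 / ((n : ℝ) - 1))) ∧
      Filter.Tendsto w (nhdsWithin K₁ (Set.Iio K₁)) Filter.atBot := by
  have hn2 : (2 : ℝ) ≤ (n : ℝ) := by exact_mod_cast hn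
  set a : ℝ := (n : ℝ) - 1 with ha_def
  have ha1 : (1 : ℝ) ≤ a := by rw [ha_def]; linarith
  have ha0 : (0 : ℝ) < a := lt_of_lt_of_le one_pos ha1
  have hc0 : (0 : ℝ) < 1 + a ^ 2 := by positivity
  set p : ℝ := -1 / a with hp_def
  -- basic characterization of the domain
  have hkey : ∀ t : ℝ, t < p ↔ 1 + a * t < 0 := by
    intro t
    rw [hp_def, lt_div_iff₀ ha0]
    constructor <;> intro h <;> nlinarith
  -- the formula in terms of `log (1 + a t)`
  have hGeq : ∀ t ∈ Iio p, F₂ t = (1 / (1 + a ^ 2)) *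
      (a * Real.log (1 + a * t) - a / 2 * Real.log (1 + t ^ 2) + Real.arctan t) := by
    intro t ht
    have hxne : 1 + a * t < 0 := (hkey t).1 ht
    have h1t : (0 : ℝ) < 1 + t ^ 2 := by positivity
    have h1 : Real.sqrt (1 + t ^ 2) ≠ 0 := by positivity
    rw [hF t, Real.log_div (abs_ne_zero.2 hxne.ne) h1, Real.log_abs,
      Real.log_sqrt h1t.le]
    ring
  -- derivative
  have hderiv : ∀ t ∈ Iio p, HasDerivAt F₂ (1 / ((1 + a * t) * (1 + t ^ 2))) t := by
    intro t ht
    have hne : 1 + a * t ≠ 0 := ((hkey t).1 ht).ne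
    have h1t : (0 : ℝ) < 1 + t ^ 2 := by positivity
    have d1 : HasDerivAt (fun x : ℝ => 1 + a * x) a t := by
      simpa using ((hasDerivAt_id t).const_mul a).const_add 1
    have dlog1 : HasDerivAt (fun x : ℝ => Real.log (1 + a * x)) (a / (1 + a * t)) t :=
      d1.log hne
    have d2 : HasDerivAt (fun x : ℝ => 1 + x ^ 2) (2 * t) t := by
      simpa using (hasDerivAt_pow 2 t).const_add 1
    have dlog2 : HasDerivAt (fun x : ℝ => Real.log (1 + x ^ 2)) (2 * t / (1 + t ^ 2)) t :=
      d2.log h1t.ne'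
    have dG : HasDerivAt (fun x : ℝ => (1 / (1 + a ^ 2)) *
        (a * Real.log (1 + a * x) - a / 2 * Real.log (1 + x ^ 2) + Real.arctan x))
        ((1 / (1 + a ^ 2)) * (a * (a / (1 + a * t)) - a / 2 * (2 * t / (1 + t ^ 2))
          + 1 / (1 + t ^ 2))) t :=
      (((dlog1.const_mul a).sub (dlog2.const_mul (a / 2))).add (hasDerivAt_arctan t)).const_mul _
    have heq : F₂ =ᶠ[nhds t] fun x => (1 / (1 + a ^ 2)) *
        (a * Real.log (1 + a * x) - a / 2 * Real.log (1 + x ^ 2) + Real.arctan x) := by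
      filter_upwards [Iio_mem_nhds ht] with x hx using hGeq x hx
    have hd := dG.congr_of_eventuallyEq heq
    refine hd.congr_deriv ?_
    field_simp
    ring
  have hcont : ContinuousOn F₂ (Iio p) := fun t ht =>
    (hderiv t ht).continuousAt.continuousWithinAt
  -- strictly decreasing
  have hanti : StrictAntiOn F₂ (Iio p) := by
    apply strictAntiOn_of_deriv_neg (convex_Iio p) hcont
    intro x hx
    rw [interior_Iio] at hx
    rw [(hderiv x hx).deriv]
    have h1 : 1 + a * x < 0 := (hkey x).1 hx
    have h2 : (1 + a * x) * (1 + x ^ 2) < 0 := mul_neg_of_neg_of_pos h1 (by positivity)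
    exact div_neg_of_pos_of_neg one_pos h2
  -- limit at -∞
  have hlimbot : Tendsto F₂ atBot (nhds K₁) := by
    have hratio : Tendsto (fun t : ℝ => |1 + a * t| / Real.sqrt (1 + t ^ 2)) atBot (nhds a) := by
      have hψ : Continuous (fun u : ℝ => Real.sqrt ((u + a) ^ 2 / (u ^ 2 + 1))) := by
        apply Real.continuous_sqrt.comp
        exact Continuous.div (by continuity) (by continuity) (fun u => by positivity)
      have h0 : Tendsto (fun t : ℝ => t⁻¹) atBot (nhds 0) := by
        have h1 := (tendsto_inv_atTop_zero (𝕜 := ℝ)).comp tendsto_neg_atBot_atTop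
        have h2 := h1.neg
        simpa [Function.comp, inv_neg] using h2
      have hval : Real.sqrt (((0:ℝ) + a) ^ 2 / ((0:ℝ) ^ 2 + 1)) = a := by
        rw [show ((0:ℝ) + a) ^ 2 / ((0:ℝ) ^ 2 + 1) = a ^ 2 by ring, Real.sqrt_sq ha0.le]
      have hcomp : Tendsto ((fun u : ℝ => Real.sqrt ((u + a) ^ 2 / (u ^ 2 + 1))) ∘
          fun t : ℝ => t⁻¹) atBot (nhds a) := by
        have h := (hψ.continuousAt (x := (0:ℝ))).tendsto.comp h0
        rwa [hval] at h
      refine Tendsto.congr' ?_ hcomp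
      filter_upwards [eventually_lt_atBot (0 : ℝ)] with t ht
      have ht0 : t ≠ 0 := ht.ne
      have heq2 : (t⁻¹ + a) ^ 2 / ((t⁻¹) ^ 2 + 1) = (1 + a * t) ^ 2 / (1 + t ^ 2) := by
        field_simp
      simp only [Function.comp_apply]
      rw [heq2, Real.sqrt_div (sq_nonneg _), Real.sqrt_sq_eq_abs]
    have hloga : Tendsto (fun t : ℝ => Real.log (|1 + a * t| / Real.sqrt (1 + t ^ 2)))
        atBot (nhds (Real.log a)) :=
      (Real.continuousAt_log ha0.ne').tendsto.comp hratio
    have harb : Tendsto Real.arctan atBot (nhds (-(Real.pi / 2))) :=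
      tendsto_nhds_of_tendsto_nhdsWithin Real.tendsto_arctan_atBot
    have hfun : F₂ = fun t => (1 / (1 + a ^ 2)) *
        (a * Real.log (|1 + a * t| / Real.sqrt (1 + t ^ 2)) + Real.arctan t) := funext hF
    rw [hfun, hK]
    have := ((hloga.const_mul a).add harb).const_mul (1 / (1 + a ^ 2))
    convert this using 2
    try ring
  -- limit at the right endpoint
  have hlimright : Tendsto F₂ (nhdsWithin p (Iio p)) atBot := by
    have hc : Continuous fun t : ℝ => 1 + a * t := by continuity
    have h0p : 1 + a * p = 0 := by rw [hp_def]; field_simp; ring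
    have h1 : Tendsto (fun t : ℝ => 1 + a * t) (nhdsWithin p (Iio p)) (nhdsWithin 0 {x | x ≠ 0}) := by
      apply tendsto_nhdsWithin_of_tendsto_nhds_of_eventually_within
      · simpa [h0p] using (hc.tendsto p).mono_left nhdsWithin_le_nhds
      · filter_upwards [self_mem_nhdsWithin] with t ht
        exact ((hkey t).1 ht).ne
    have hlog : Tendsto (fun t : ℝ => Real.log (1 + a * t)) (nhdsWithin p (Iio p)) atBot :=
      Real.tendsto_log_nhdsNE_zero.comp h1
    have hpart1 : Tendsto (fun t : ℝ => (1 / (1 + a ^ 2)) * (a * Real.log (1 + a * t)))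
        (nhdsWithin p (Iio p)) atBot := by
      apply Tendsto.const_mul_atBot (by positivity)
      exact Tendsto.const_mul_atBot ha0 hlog
    have hlogc : Continuous fun t : ℝ => Real.log (1 + t ^ 2) := by
      have hbase : Continuous fun t : ℝ => 1 + t ^ 2 := continuous_const.add (continuous_pow 2)
      refine Real.continuousOn_log.comp_continuous hbase fun t => ?_
      simp only [Set.mem_compl_iff, Set.mem_singleton_iff]
      exact (by positivity : (0:ℝ) < 1 + t ^ 2).ne'
    have hc2 : Continuous fun t : ℝ =>
        (1 / (1 + a ^ 2)) * (-(a / 2) * Real.log (1 + t ^ 2) + Real.arctan t) :=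
      continuous_const.mul ((continuous_const.mul hlogc).add Real.continuous_arctan)
    have hpart2 : Tendsto (fun t : ℝ =>
        (1 / (1 + a ^ 2)) * (-(a / 2) * Real.log (1 + t ^ 2) + Real.arctan t))
        (nhdsWithin p (Iio p)) (nhds ((1 / (1 + a ^ 2)) *
          (-(a / 2) * Real.log (1 + p ^ 2) + Real.arctan p))) :=
      (hc2.tendsto p).mono_left nhdsWithin_le_nhds
    have hsum := hpart2.add_atBot hpart1
    refine Tendsto.congr' ?_ hsum
    filter_upwards [self_mem_nhdsWithin] with t ht
    rw [hGeq t ht]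
    ring
  -- F₂ < K₁ on the domain
  have hlt : ∀ t ∈ Iio p, F₂ t < K₁ := by
    intro t ht
    have htm : t - 1 ∈ Iio p := by simp only [mem_Iio] at ht ⊢; linarith
    have h1 : F₂ (t - 1) ≤ K₁ := by
      apply ge_of_tendsto hlimbot
      filter_upwards [eventually_le_atBot (t - 1)] with x hx
      have hxm : x ∈ Iio p := lt_of_le_of_lt hx htm
      exact hanti.antitoneOn hxm htm hx
    have h2 : F₂ t < F₂ (t - 1) := hanti htm ht (by linarith)
    linarith
  have hmaps : MapsTo F₂ (Iio p) (Iio K₁) := fun t ht => hlt t ht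
  -- surjectivity
  have hsurj : SurjOn F₂ (Iio p) (Iio K₁) := by
    intro y hy
    obtain ⟨t₁, ht₁y, ht₁p⟩ : ∃ t₁, F₂ t₁ < y ∧ t₁ ∈ Iio p :=
      ((hlimright.eventually (eventually_lt_atBot y)).and eventually_mem_nhdsWithin).exists
    obtain ⟨t₀, hyt₀, ht₀₁⟩ : ∃ t₀, y < F₂ t₀ ∧ t₀ < t₁ :=
      ((hlimbot.eventually (eventually_gt_nhds hy)).and (eventually_lt_atBot t₁)).exists
    have hsub : uIcc t₀ t₁ ⊆ Iio p := by
      rw [uIcc_of_le ht₀₁.le]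
      exact fun x hx => lt_of_le_of_lt hx.2 ht₁p
    have hmem : y ∈ uIcc (F₂ t₀) (F₂ t₁) := by
      rw [mem_uIcc]
      exact Or.inr ⟨ht₁y.le, hyt₀.le⟩
    obtain ⟨t, htmem, hty⟩ := intermediate_value_uIcc (hcont.mono hsub) hmem
    exact ⟨t, hsub htmem, hty⟩
  refine ⟨hanti, ⟨hmaps, hanti.injOn, hsurj⟩, hlimbot, hlimright, ?_⟩
  intro w hw_maps hw_inv
  -- comparison lemmas
  have hwlt : ∀ s ∈ Iio K₁, ∀ t, t < p → (F₂ t < s ↔ w s < t) := by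
    intro s hs t ht
    have h := hanti.lt_iff_gt ht (hw_maps hs)
    rwa [hw_inv.2 hs] at h
  have hwgt : ∀ s ∈ Iio K₁, ∀ t, t < p → (s < F₂ t ↔ t < w s) := by
    intro s hs t ht
    have h := hanti.lt_iff_gt (hw_maps hs) ht
    rwa [hw_inv.2 hs] at h
  -- continuity of w
  have hcontw : ∀ s ∈ Iio K₁, ContinuousAt w s := by
    intro s hs
    rw [ContinuousAt]
    apply tendsto_order.2
    constructor
    · intro b hb
      have hbp : b < p := hb.trans (hw_maps hs)
      have hFb : s < F₂ b := (hwgt s hs b hbp).2 hb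
      filter_upwards [Iio_mem_nhds (lt_min hFb hs)] with s' hs'
      have hs'K : s' ∈ Iio K₁ := mem_Iio.2 (lt_of_lt_of_le hs' (min_le_right _ _))
      exact (hwgt s' hs'K b hbp).1 (lt_of_lt_of_le hs' (min_le_left _ _))
    · intro b hb
      by_cases hbp : b < p
      · have hFb : F₂ b < s := (hwlt s hs b hbp).2 hb
        filter_upwards [Ioo_mem_nhds hFb hs] with s' hs'
        exact (hwlt s' hs'.2 b hbp).1 hs'.1
      · push_neg at hbp
        filter_upwards [Iio_mem_nhds hs] with s' hs'
        exact lt_of_lt_of_le (hw_maps hs') hbp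
  -- derivative of w
  have hderw : ∀ s ∈ Iio K₁, HasDerivAt w ((1 + w s ^ 2) * (1 + a * w s)) s := by
    intro s hs
    have htmem : w s ∈ Iio p := hw_maps hs
    have hne : 1 + a * w s < 0 := (hkey _).1 htmem
    have h1t : (0 : ℝ) < 1 + (w s) ^ 2 := by positivity
    have hd := hderiv (w s) htmem
    have hne' : 1 / ((1 + a * w s) * (1 + (w s) ^ 2)) ≠ 0 :=
      div_ne_zero one_ne_zero (mul_ne_zero hne.ne h1t.ne')
    have hev : ∀ᶠ x in nhds s, F₂ (w x) = x := by
      filter_upwards [Iio_mem_nhds hs] with x hx using hw_inv.2 hx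
    have h := HasDerivAt.of_local_left_inverse (hcontw s hs) hd hne' hev
    refine h.congr_deriv ?_
    rw [one_div, inv_inv]
    ring
  -- limits of w
  have hwbot : Tendsto w atBot (nhds p) := by
    apply tendsto_order.2
    constructor
    · intro b hb
      have hFb : F₂ b < K₁ := hlt b hb
      filter_upwards [eventually_lt_atBot (min (F₂ b) K₁)] with s hsm
      have hsK : s ∈ Iio K₁ := mem_Iio.2 (hsm.trans_le (min_le_right _ _))
      exact (hwgt s hsK b hb).1 (hsm.trans_le (min_le_left _ _))
    · intro b hb
      filter_upwards [eventually_lt_atBot K₁] with s hsK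
      exact (hw_maps hsK).trans hb
  have hwK : Tendsto w (nhdsWithin K₁ (Iio K₁)) atBot := by
    apply tendsto_atBot.2
    intro M
    have ht₀p : min M (p - 1) < p := lt_of_le_of_lt (min_le_right _ _) (by linarith)
    have hs₀ : F₂ (min M (p - 1)) < K₁ := hlt _ ht₀p
    filter_upwards [Ioo_mem_nhdsLT hs₀] with s hsmem
    have hws : w s < min M (p - 1) := (hwlt s hsmem.2 _ ht₀p).1 hsmem.1
    exact hws.le.trans (min_le_left _ _)
  exact ⟨hderw, hwbot, hwK⟩
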